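/- Let m ≥ k, and let M_k*(q) be any edge-colored tournament obtained from M_k(q) by replacing each pair of oppositely oriented color-0 edges by a single oriented edge carrying an arbitrary color in {1, …, k/2} (arbitrary orientation and color for each such pair), while keeping all other edges and their colors. If P_k(q) contains no monochromatic transitive subtournament of order m, then M_k*(q) contains no monochromatic transitive subtournament of order m+2. -/

import Mathlib

/-- `S_k = ⟨ω^k⟩`, the set of nonzero `k`-th power residues of `F`
(for `ω` a primitive element of the finite field `F`). -/
def Sk {F : Type} [Field F] (ω : F) (k : ℕ) : Set F :=
  {x | ∃ n : ℕ, x = ω ^ (k * n)}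

/-- `S_{k,0} = {0}` and `S_{k,i} = ω^(i-1) • S_k` for `i ≥ 1`. -/
def Ski {F : Type} [Field F] (ω : F) (k : ℕ) : ℕ → Set F
  | 0 => {0}
  | (i + 1) => {x | ∃ n : ℕ, x = ω ^ i * ω ^ (k * n)}

/-- The vertex set of the Mathon-type digraph `M_k(q)`: equivalence classes of
`X = (F × F) \ {(0,0)}` under `(a,b) ~ (ag,bg)` for `g ∈ S_k`. -/
def Vtx (F : Type) [Field F] (ω : F) (k : ℕ) : Type :=
  Quot (fun p q : {p : F × F // p ≠ (0, 0)} =>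
    ∃ g ∈ Sk ω k, q.1 = (p.1.1 * g, p.1.2 * g))

/-- The equivalence class `[a, b]` of a nonzero pair `(a, b)`. -/
def vmk {F : Type} [Field F] (ω : F) (k : ℕ) (p : {p : F × F // p ≠ (0, 0)}) :
    Vtx F ω k :=
  Quot.mk _ p

/-- `[a,b] → [c,d]` is an edge of color `i` in `M_k(q)` iff `bc - ad ∈ S_{k,i}`
(well-defined since `g S_{k,i} = S_{k,i}` for `g ∈ S_k`). -/
def Edge {F : Type} [Field F] (ω : F) (k : ℕ) (u v : Vtx F ω k) (i : ℕ) : Prop :=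
  ∃ p q : {p : F × F // p ≠ (0, 0)},
    u = vmk ω k p ∧ v = vmk ω k q ∧
      p.1.2 * q.1.1 - p.1.1 * q.1.2 ∈ Ski ω k i

section Aux

variable {F : Type} [Field F]

/-- `x` lies in the coset `ω^j ⟨ω^k⟩`. -/
def Cos (ω : F) (k : ℕ) (j : ZMod k) (x : F) : Prop :=
  ∃ n : ℕ, x = ω ^ n ∧ (n : ZMod k) = j

lemma cos_mul {ω : F} {k : ℕ} {j j' : ZMod k} {x y : F}
    (hx : Cos ω k j x) (hy : Cos ω k j' y) : Cos ω k (j + j') (x * y) := by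
  obtain ⟨n, rfl, hn⟩ := hx
  obtain ⟨n', rfl, hn'⟩ := hy
  exact ⟨n + n', by rw [pow_add], by push_cast [hn, hn']; ring⟩

lemma cos_ne_zero {ω : F} (hω0 : ω ≠ 0) {k : ℕ} {j : ZMod k} {x : F}
    (hx : Cos ω k j x) : x ≠ 0 := by
  obtain ⟨n, rfl, -⟩ := hx; exact pow_ne_zero _ hω0

variable {ω : F} {k e : ℕ}

lemma cos_unique (hinj : ∀ a b : ℕ, ω ^ a = ω ^ b → a ≡ b [MOD e])
    (hdvd : k ∣ e) {j j' : ZMod k} {x : F}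
    (h : Cos ω k j x) (h' : Cos ω k j' x) : j = j' := by
  obtain ⟨n, rfl, hn⟩ := h
  obtain ⟨n', hn', hn''⟩ := h'
  have h2 : n ≡ n' [MOD k] := (hinj n n' hn').of_dvd hdvd
  rw [← hn, ← hn'']
  exact (ZMod.natCast_eq_natCast_iff _ _ _).mpr h2

lemma cos_div [NeZero k] (he : ω ^ e = 1) (he1 : 1 ≤ e) (hdvd : k ∣ e)
    {j j' : ZMod k} {x y : F}
    (hx : Cos ω k j x) (hy : Cos ω k j' y) : Cos ω k (j - j') (x / y) := by
  obtain ⟨n, rfl, hn⟩ := hx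
  obtain ⟨n', rfl, hn'⟩ := hy
  have hyinv : (ω ^ n')⁻¹ = ω ^ (n' * (e - 1)) := by
    refine (inv_eq_of_mul_eq_one_right ?_)
    rw [← pow_add]
    have h1 : n' + n' * (e - 1) = n' * e := by
      cases e with
      | zero => omega
      | succ e' => simp [Nat.mul_succ, Nat.succ_sub_one]; ring
    rw [h1, pow_mul', he, one_pow]
  refine ⟨n + n' * (e - 1), by rw [div_eq_mul_inv, hyinv, pow_add], ?_⟩
  have hek : ((e : ℕ) : ZMod k) = 0 := (ZMod.natCast_eq_zero_iff e k).mpr hdvd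
  push_cast [Nat.cast_sub he1]
  rw [hn, hn', hek]
  ring

lemma mem_ski_iff [NeZero k] (he : ω ^ e = 1) (he1 : 1 ≤ e) (hdvd : k ∣ e)
    (c0 : ℕ) {x : F} :
    x ∈ Ski ω k (c0 + 1) ↔ Cos ω k ((c0 : ℕ) : ZMod k) x := by
  constructor
  · rintro ⟨n, rfl⟩
    refine ⟨c0 + k * n, by rw [pow_add], ?_⟩
    push_cast [ZMod.natCast_self]
    ring
  · rintro ⟨n, rfl, hn⟩
    have hmod : n ≡ c0 [MOD k] := (ZMod.natCast_eq_natCast_iff _ _ _).mp hn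
    set N := n + e * c0 with hN
    have h1 : ω ^ N = ω ^ n := by rw [hN, pow_add, pow_mul, he, one_pow, mul_one]
    have h0 : e * c0 ≡ 0 [MOD k] := (Nat.modEq_zero_iff_dvd).mpr (hdvd.mul_right c0)
    have h2 : c0 ≡ N [MOD k] := by
      have := (hmod.add h0).symm
      simpa [hN] using this
    have h3 : c0 ≤ N := by
      have : c0 * 1 ≤ e * c0 := by
        calc c0 * 1 = 1 * c0 := by ring
        _ ≤ e * c0 := Nat.mul_le_mul_right c0 he1
      omega
    obtain ⟨mm, hmm⟩ := (Nat.modEq_iff_dvd' h3).mp h2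
    refine ⟨mm, ?_⟩
    rw [← h1, show N = c0 + k * mm by omega, pow_add]

lemma mem_sk_iff [NeZero k] (he : ω ^ e = 1) (he1 : 1 ≤ e) (hdvd : k ∣ e)
    {x : F} : x ∈ Sk ω k ↔ Cos ω k 0 x := by
  have h : x ∈ Sk ω k ↔ x ∈ Ski ω k (0 + 1) := by
    constructor
    · rintro ⟨n, rfl⟩; exact ⟨n, by rw [pow_zero, one_mul]⟩
    · rintro ⟨n, rfl⟩; exact ⟨n, by rw [pow_zero, one_mul]⟩
  rw [h, mem_ski_iff he he1 hdvd 0]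
  norm_num

lemma exists_min {α : Type*} {T : Set α} (hfin : T.Finite) (hne : T.Nonempty)
    {r : α → α → Prop} (hirr : ∀ v, ¬r v v)
    (htour : ∀ u v, u ≠ v → (r u v ↔ ¬ r v u))
    (htrans : ∀ a ∈ T, ∀ b ∈ T, ∀ d ∈ T, r a b → r b d → r a d) :
    ∃ p ∈ T, ∀ w ∈ T, w ≠ p → r p w := by
  classical
  set s := hfin.toFinset with hs
  have hsne : s.Nonempty := by
    obtain ⟨x, hx⟩ := hne
    exact ⟨x, by simpa [hs] using hx⟩
  obtain ⟨p, hp, hmax⟩ := s.exists_max_image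
    (fun v => (s.filter (fun x => r v x)).card) hsne
  have hpT : p ∈ T := by simpa [hs] using hp
  refine ⟨p, hpT, ?_⟩
  intro w hw hwp
  by_contra hrpw
  have hws : w ∈ s := by simpa [hs] using hw
  have hrwp : r w p := by
    have h := htour p w (Ne.symm hwp)
    tauto
  have hsub : insert p (s.filter (fun x => r p x)) ⊆ s.filter (fun x => r w x) := by
    intro x hx
    rcases Finset.mem_insert.mp hx with rfl | hx
    · exact Finset.mem_filter.mpr ⟨hp, hrwp⟩
    · obtain ⟨hxs, hpx⟩ := Finset.mem_filter.mp hx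
      refine Finset.mem_filter.mpr ⟨hxs, ?_⟩
      have hxT : x ∈ T := by simpa [hs] using hxs
      have hwx : w ≠ x := by rintro rfl; exact hrpw hpx
      exact htrans w hw p hpT x hxT hrwp hpx
  have hcard := Finset.card_le_card hsub
  rw [Finset.card_insert_of_notMem (by simp [hirr p])] at hcard
  have := hmax w hws
  omega

lemma prop_of_det0 {P Q : F × F} (hP : P ≠ (0,0)) (hQ : Q ≠ (0,0))
    (h : P.2 * Q.1 - P.1 * Q.2 = 0) :
    ∃ l : F, l ≠ 0 ∧ Q.1 = P.1 * l ∧ Q.2 = P.2 * l := by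
  have hh : P.2 * Q.1 = P.1 * Q.2 := by linear_combination h
  have hP' : P.1 ≠ 0 ∨ P.2 ≠ 0 := by
    by_contra hc
    push_neg at hc
    exact hP (Prod.ext_iff.mpr ⟨hc.1, hc.2⟩)
  rcases hP' with ha | hb
  · refine ⟨Q.1 / P.1, ?_, by field_simp, by field_simp; linear_combination -hh⟩
    intro h0
    have hq1 : Q.1 = 0 := by
      rcases div_eq_zero_iff.mp h0 with h1 | h1
      · exact h1
      · exact absurd h1 ha
    have hq2 : Q.2 = 0 := by
      have : P.1 * Q.2 = 0 := by rw [← hh, hq1, mul_zero]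
      rcases mul_eq_zero.mp this with h1 | h1
      · exact absurd h1 ha
      · exact h1
    exact hQ (Prod.ext_iff.mpr ⟨hq1, hq2⟩)
  · refine ⟨Q.2 / P.2, ?_, by field_simp; linear_combination hh, by field_simp⟩
    intro h0
    have hq2 : Q.2 = 0 := by
      rcases div_eq_zero_iff.mp h0 with h1 | h1
      · exact h1
      · exact absurd h1 hb
    have hq1 : Q.1 = 0 := by
      have : P.2 * Q.1 = 0 := by rw [hh, hq2, mul_zero]
      rcases mul_eq_zero.mp this with h1 | h1
      · exact absurd h1 hb
      · exact h1
    exact hQ (Prod.ext_iff.mpr ⟨hq1, hq2⟩)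

end Aux

set_option maxHeartbeats 1000000 in
/-- Theorem (Mathon-type construction): let `m ≥ k`, and let `M_k*(q)` be any
edge-colored tournament `(r, c)` on the vertex set of `M_k(q)` obtained by
keeping every single oriented edge of color `1 ≤ i ≤ k/2` with its color, and
replacing each pair of oppositely oriented color-0 edges by a single oriented
edge of arbitrary orientation and arbitrary color in `{1, …, k/2}`.  If the
multicolor `k`-th power Paley tournament `P_k(q)` has no monochromatic
transitive subtournament of order `m`, then `M_k*(q)` has no monochromatic
transitive subtournament of order `m + 2`. -/
theorem stmt_18 (k : ℕ) (hk2 : 2 ≤ k) (hke : Even k)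
    (F : Type) [Field F] [Fintype F]
    (hq : Fintype.card F % (2 * k) = k + 1)
    (ω : F) (hω : ∀ x : F, x ≠ 0 → ∃ n : ℕ, x = ω ^ n)
    (m : ℕ) (hm : k ≤ m)
    -- `M_k*(q)`: a tournament `r` on the vertices of `M_k(q)`, with edge
    -- coloring `c`,
    (r : Vtx F ω k → Vtx F ω k → Prop)
    (c : Vtx F ω k → Vtx F ω k → ℕ)
    (hirr : ∀ v, ¬ r v v)
    (htour : ∀ u v : Vtx F ω k, u ≠ v → (r u v ↔ ¬ r v u))
    -- which keeps every single oriented edge of `M_k(q)` of color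
    -- `1 ≤ i ≤ k/2` together with its color,
    (hkeep : ∀ u v : Vtx F ω k, ∀ i : ℕ, 1 ≤ i → i ≤ k / 2 →
      Edge ω k u v i → r u v ∧ c u v = i)
    -- and colors every edge (in particular each edge replacing a pair of
    -- oppositely oriented color-0 edges) in `{1, …, k/2}`:
    (hcol : ∀ u v : Vtx F ω k, r u v → 1 ≤ c u v ∧ c u v ≤ k / 2)
    -- `P_k(q)` has no monochromatic transitive subtournament of order `m`:
    (hPaley : ¬ ∃ i : ℕ, 1 ≤ i ∧ i ≤ k / 2 ∧
      ∃ T : Set F, T.ncard = m ∧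
        (∀ a ∈ T, ∀ b ∈ T, a ≠ b →
          (b - a ∈ Ski ω k i ∨ a - b ∈ Ski ω k i)) ∧
        (∀ a ∈ T, ∀ b ∈ T, ∀ d ∈ T,
          b - a ∈ Ski ω k i → d - b ∈ Ski ω k i → d - a ∈ Ski ω k i)) :
    -- then `M_k*(q)` has no monochromatic transitive subtournament of
    -- order `m + 2`:
    ¬ ∃ (col : ℕ) (T : Set (Vtx F ω k)), T.ncard = m + 2 ∧
      (∀ a ∈ T, ∀ b ∈ T, r a b → c a b = col) ∧
      (∀ a ∈ T, ∀ b ∈ T, ∀ d ∈ T, r a b → r b d → r a d) := by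
  rintro ⟨col, T, hTcard, hmono, htrans⟩
  classical
  -- numeric facts
  have hk0 : 0 < k := by omega
  have hkmod : k % 2 = 0 := Nat.even_iff.mp hke
  haveI : NeZero k := ⟨by omega⟩
  set q := Fintype.card F with hqdef
  have hq2 : 1 < q := Fintype.one_lt_card
  have hqe : q = 2 * k * (q / (2 * k)) + (k + 1) := by
    conv_lhs => rw [← Nat.div_add_mod q (2 * k)]
    rw [hq]
  set t := q / (2 * k) with htdef
  set e := q - 1 with hedef
  set A := k * t with hA
  have hqA : q = 2 * A + (k + 1) := by
    calc q = 2 * k * t + (k + 1) := hqe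
    _ = 2 * A + (k + 1) := by rw [hA]; ring
  have hee : e = 2 * A + k := by omega
  have he1 : 1 ≤ e := by omega
  have hdvd : k ∣ e := ⟨2 * t + 1, by rw [hee, hA]; ring⟩
  -- ω is nonzero
  have hω0 : ω ≠ 0 := by
    intro h0
    have hall : ∀ x : F, x = 0 ∨ x = 1 := by
      intro x
      by_cases hx : x = 0
      · exact Or.inl hx
      · obtain ⟨n, hn⟩ := hω x hx
        rw [h0] at hn
        rcases Nat.eq_zero_or_pos n with rfl | hn0
        · right; simpa using hn
        · exact absurd (by rw [hn, zero_pow (by omega)]) hx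
    have hsub : (Finset.univ : Finset F) ⊆ {0, 1} := by
      intro x _
      rcases hall x with h | h <;> simp [h]
    have hcard := Finset.card_le_card hsub
    have h2 : ({0, 1} : Finset F).card ≤ 2 :=
      (Finset.card_insert_le _ _).trans (by simp)
    rw [Finset.card_univ] at hcard
    omega
  have hu1 : ω ^ e = 1 := FiniteField.pow_card_sub_one_eq_one ω hω0
  -- injectivity of powers of ω mod e
  have hinj : ∀ a b : ℕ, ω ^ a = ω ^ b → a ≡ b [MOD e] := by
    have hord : orderOf (Units.mk0 ω hω0) = e := by
      have hgen : ∀ v : Fˣ, v ∈ Subgroup.zpowers (Units.mk0 ω hω0) := by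
        intro v
        obtain ⟨n, hn⟩ := hω v (Units.ne_zero v)
        have hv : Units.mk0 ω hω0 ^ n = v := by
          ext
          rw [Units.val_pow_eq_pow_val, Units.val_mk0]
          exact hn.symm
        exact ⟨(n : ℤ), by simpa using hv⟩
      have h := orderOf_eq_card_of_forall_mem_zpowers hgen
      rw [h, Nat.card_eq_fintype_card, Fintype.card_units]
    intro a b hab
    have h : (Units.mk0 ω hω0) ^ a = (Units.mk0 ω hω0) ^ b := by
      ext; push_cast; exact hab
    rw [← hord]
    exact pow_eq_pow_iff_modEq.mp h
  -- the coset of -1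
  set κ : ZMod k := ((k / 2 : ℕ) : ZMod k) with hκ
  have hm1 : Cos ω k κ (-1) := by
    refine ⟨A + k / 2, ?_, ?_⟩
    · set z := ω ^ (A + k / 2) with hz
      have hz2 : z * z = 1 := by
        rw [hz, ← pow_add]
        rw [show A + k / 2 + (A + k / 2) = e by omega, hu1]
      have hzne : z ≠ 1 := by
        intro hz1
        have h := hinj (A + k / 2) 0 (by simpa [hz] using hz1)
        have h0 : (A + k / 2) % e = 0 := by simpa [Nat.ModEq] using h
        rw [Nat.mod_eq_of_lt (by omega)] at h0
        omega
      have hfac : (z - 1) * (z + 1) = 0 := by linear_combination hz2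
      rcases mul_eq_zero.mp hfac with h | h
      · exact absurd (by linear_combination h) hzne
      · exact (by linear_combination -h : (-1 : F) = z)
    · show ((A + k / 2 : ℕ) : ZMod k) = κ
      rw [hκ, hA, Nat.cast_add, Nat.cast_mul, ZMod.natCast_self, zero_mul, zero_add]
  have hκ0 : κ ≠ 0 := by
    rw [hκ]
    intro h
    have hd := (ZMod.natCast_eq_zero_iff _ k).mp h
    have := Nat.le_of_dvd (by omega) hd
    omega
  -- instantiated coset lemmas
  have cdiv : ∀ {j j' : ZMod k} {x y : F}, Cos ω k j x → Cos ω k j' y →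
      Cos ω k (j - j') (x / y) := fun hx hy => cos_div hu1 he1 hdvd hx hy
  have cuni : ∀ {j j' : ZMod k} {x : F}, Cos ω k j x → Cos ω k j' x → j = j' :=
    fun hx hy => cos_unique hinj hdvd hx hy
  have cneg : ∀ {j : ZMod k} {x : F}, Cos ω k j x → Cos ω k (j + κ) (-x) := by
    intro j x hx
    have := cos_mul hx hm1
    simpa using this
  have hski : ∀ (c0 : ℕ) (x : F), x ∈ Ski ω k (c0 + 1) ↔ Cos ω k ((c0 : ℕ) : ZMod k) x :=
    fun c0 x => mem_ski_iff hu1 he1 hdvd c0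
  have hskmem : ∀ {x : F}, x ∈ Sk ω k ↔ Cos ω k 0 x := fun {x} => mem_sk_iff hu1 he1 hdvd
  -- T is finite and nonempty
  have hTfin : T.Finite := by
    by_contra h
    rw [Set.Infinite.ncard (fun hf => h hf)] at hTcard
    omega
  have hTne : T.Nonempty := by
    rcases Set.eq_empty_or_nonempty T with h | h
    · rw [h, Set.ncard_empty] at hTcard; omega
    · exact h
  -- representatives
  have hrep : ∀ v : Vtx F ω k, ∃ p, vmk ω k p = v := fun v => Quot.exists_rep v
  choose ρ hρ using hrep
  set Dt : Vtx F ω k → Vtx F ω k → F :=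
    fun v w => (ρ v).1.2 * (ρ w).1.1 - (ρ v).1.1 * (ρ w).1.2 with hDt
  have hedge : ∀ (v w : Vtx F ω k) (i : ℕ), Dt v w ∈ Ski ω k i → Edge ω k v w i :=
    fun v w i h => ⟨ρ v, ρ w, (hρ v).symm, (hρ w).symm, h⟩
  have hsound2 : ∀ (P Q : {p : F × F // p ≠ (0, 0)}) (l : F), Cos ω k 0 l →
      Q.1.1 = P.1.1 * l → Q.1.2 = P.1.2 * l → vmk ω k P = vmk ω k Q := by
    intro P Q l hl h1 h2
    have hlS : l ∈ Sk ω k := hskmem.mpr hl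
    exact Quot.sound ⟨l, hlS, Prod.ext_iff.mpr ⟨h1, h2⟩⟩
  have hsound : ∀ (v w : Vtx F ω k) (l : F), Cos ω k 0 l →
      (ρ w).1.1 = (ρ v).1.1 * l → (ρ w).1.2 = (ρ v).1.2 * l → v = w := by
    intro v w l hl h1 h2
    rw [← hρ v, ← hρ w]
    exact hsound2 (ρ v) (ρ w) l hl h1 h2
  have hratio : ∀ v w : Vtx F ω k, Dt v w = 0 → ∃ l : F, l ≠ 0 ∧
      (ρ w).1.1 = (ρ v).1.1 * l ∧ (ρ w).1.2 = (ρ v).1.2 * l ∧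
      (∀ z : Vtx F ω k, Dt w z = l * Dt v z) := by
    intro v w h
    obtain ⟨l, hl0, h1, h2⟩ := prop_of_det0 (ρ v).2 (ρ w).2 h
    refine ⟨l, hl0, h1, h2, ?_⟩
    intro z
    simp only [hDt]
    rw [h1, h2]
    ring
  -- minimum of T
  obtain ⟨p, hpT, hpmin⟩ := exists_min hTfin hTne hirr htour htrans
  -- another vertex, and the color bounds
  obtain ⟨y0, hy0T, hy0p⟩ : ∃ y ∈ T, y ≠ p := by
    by_contra h
    push_neg at h
    have hsub : T ⊆ {p} := fun x hx => h x hx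
    have := Set.ncard_le_ncard hsub (Set.finite_singleton p)
    rw [Set.ncard_singleton] at this
    omega
  have hrpy0 : r p y0 := hpmin y0 hy0T hy0p
  have hcolb : 1 ≤ col ∧ col ≤ k / 2 := by
    have h1 := hcol p y0 hrpy0
    have h2 := hmono p hpT y0 hy0T hrpy0
    omega
  obtain ⟨c0, rfl⟩ : ∃ c0, col = c0 + 1 := ⟨col - 1, by omega⟩
  -- master lemma
  have master : ∀ v ∈ T, ∀ w ∈ T, Dt v w ≠ 0 →
      (Cos ω k ((c0 : ℕ) : ZMod k) (Dt v w) ∧ r v w) ∨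
      (Cos ω k (((c0 : ℕ) : ZMod k) + κ) (Dt v w) ∧ r w v) := by
    intro v hv w hw hD
    obtain ⟨n, hn⟩ := hω _ hD
    set s := n % k with hs
    have hsk' : s < k := Nat.mod_lt _ hk0
    have hcosS : Cos ω k ((s : ℕ) : ZMod k) (Dt v w) :=
      ⟨n, hn, by rw [hs, ZMod.natCast_mod]⟩
    by_cases hcase : s < k / 2
    · have hmem : Dt v w ∈ Ski ω k (s + 1) := (hski s _).mpr hcosS
      have hk' := hkeep v w (s + 1) (by omega) (by omega) (hedge v w (s + 1) hmem)
      have hcc : s + 1 = c0 + 1 := by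
        have := hmono v hv w hw hk'.1
        omega
      left
      refine ⟨?_, hk'.1⟩
      rw [show ((c0 : ℕ) : ZMod k) = ((s : ℕ) : ZMod k) by rw [show s = c0 by omega]]
      exact hcosS
    · set s' := s - k / 2 with hs'
      have hDwv : Dt w v = - Dt v w := by simp only [hDt]; ring
      have hcos' : Cos ω k ((s' : ℕ) : ZMod k) (Dt w v) := by
        rw [hDwv]
        have h := cneg hcosS
        have hcast : ((s : ℕ) : ZMod k) + κ = ((s' : ℕ) : ZMod k) := by
          rw [hκ]
          have hsum : s = s' + k / 2 := by omega
          rw [hsum]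
          push_cast
          have hzero : ((k / 2 : ℕ) : ZMod k) + ((k / 2 : ℕ) : ZMod k) = 0 := by
            rw [← Nat.cast_add, show k / 2 + k / 2 = k by omega, ZMod.natCast_self]
          push_cast at hzero
          linear_combination hzero
        rw [hcast] at h
        exact h
      have hmem : Dt w v ∈ Ski ω k (s' + 1) := (hski s' _).mpr hcos'
      have hk' := hkeep w v (s' + 1) (by omega) (by omega) (hedge w v (s' + 1) hmem)
      have hcc : s' + 1 = c0 + 1 := by
        have := hmono w hw v hv hk'.1
        omega
      right
      refine ⟨?_, hk'.1⟩
      have h : Dt v w = - Dt w v := by simp only [hDt]; ring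
      rw [h]
      have h2 := cneg hcos'
      rw [show ((s' : ℕ) : ZMod k) = ((c0 : ℕ) : ZMod k) by rw [show s' = c0 by omega]] at h2
      exact h2
  -- the iff version
  have L1 : ∀ v ∈ T, ∀ w ∈ T, v ≠ w → Dt v w ≠ 0 →
      (Cos ω k ((c0 : ℕ) : ZMod k) (Dt v w) ↔ r v w) := by
    intro v hv w hw hvw hD
    rcases master v hv w hw hD with ⟨h1, h2⟩ | ⟨h1, h2⟩
    · exact ⟨fun _ => h2, fun _ => h1⟩
    · constructor
      · intro h
        have hj := cuni h h1
        exact absurd (by linear_combination -hj : κ = 0) hκ0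
      · intro hr
        exact absurd h2 ((htour v w hvw).mp hr)
  -- there is a vertex y with Dt p y ≠ 0
  obtain ⟨y, hyT, hyp, hDy⟩ : ∃ y, y ∈ T ∧ y ≠ p ∧ Dt p y ≠ 0 := by
    by_contra hc
    push_neg at hc
    have hGne : ∀ j : ZMod k, ((ρ p).1.1 * ω ^ j.val, (ρ p).1.2 * ω ^ j.val) ≠ ((0 : F), (0 : F)) := by
      intro j hj
      rw [Prod.ext_iff] at hj
      apply (ρ p).2
      rw [Prod.ext_iff]
      constructor
      · rcases mul_eq_zero.mp hj.1 with h | h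
        · exact h
        · exact absurd h (pow_ne_zero _ hω0)
      · rcases mul_eq_zero.mp hj.2 with h | h
        · exact h
        · exact absurd h (pow_ne_zero _ hω0)
    set G : ZMod k → Vtx F ω k := fun j => vmk ω k ⟨_, hGne j⟩ with hG
    have hrange : T ⊆ Set.range G := by
      intro w hw
      by_cases hwp : w = p
      · refine ⟨0, ?_⟩
        rw [hG]
        simp only
        have hsub : (⟨((ρ p).1.1 * ω ^ (0 : ZMod k).val, (ρ p).1.2 * ω ^ (0 : ZMod k).val), hGne 0⟩ :
            {p : F × F // p ≠ (0, 0)}) = ρ p := by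
          apply Subtype.ext
          rw [Prod.ext_iff]
          constructor <;> simp [ZMod.val_zero]
        rw [hsub, hρ, hwp]
      · obtain ⟨l, hl0, h1, h2, -⟩ := hratio p w (hc w hw hwp)
        obtain ⟨n, hn⟩ := hω l hl0
        refine ⟨(n : ZMod k), ?_⟩
        have hval : ((((n : ZMod k)).val : ℕ) : ZMod k) = (n : ZMod k) :=
          ZMod.natCast_rightInverse _
        have hlc : Cos ω k ((n : ZMod k)) l := ⟨n, hn, rfl⟩
        have hωc : Cos ω k ((n : ZMod k)) (ω ^ ((n : ZMod k)).val) :=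
          ⟨((n : ZMod k)).val, rfl, hval⟩
        have hg : Cos ω k 0 (l / ω ^ ((n : ZMod k)).val) := by
          have := cdiv hlc hωc
          simpa using this
        rw [hG]
        simp only
        calc vmk ω k ⟨((ρ p).1.1 * ω ^ ((n : ZMod k)).val, (ρ p).1.2 * ω ^ ((n : ZMod k)).val), hGne _⟩
            = vmk ω k (ρ w) := by
              apply hsound2 _ _ _ hg
              · simp only
                rw [h1]
                field_simp
              · simp only
                rw [h2]
                field_simp
        _ = w := hρ w
    have hle : T.ncard ≤ k := by
      have h1 : T.ncard ≤ (Set.range G).ncard :=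
        Set.ncard_le_ncard hrange (Set.finite_range G)
      have h2 : (Set.range G).ncard ≤ k := by
        rw [← Set.image_univ]
        calc (G '' Set.univ).ncard ≤ (Set.univ : Set (ZMod k)).ncard :=
              Set.ncard_image_le (Set.finite_univ)
        _ = k := by rw [Set.ncard_univ, Nat.card_zmod]
      omega
    omega
  have hcopy : Cos ω k ((c0 : ℕ) : ZMod k) (Dt p y) :=
    (L1 p hpT y hyT (Ne.symm hyp) hDy).mpr (hpmin y hyT hyp)
  -- badness is unique
  have hbad : ∀ w ∈ T, w ≠ p → ∀ w' ∈ T, w' ≠ p → Dt p w = 0 → Dt p w' = 0 → w = w' := by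
    have key : ∀ w ∈ T, w ≠ p → Dt p w = 0 → ∃ l : F, Cos ω k κ l ∧
        (ρ w).1.1 = (ρ p).1.1 * l ∧ (ρ w).1.2 = (ρ p).1.2 * l := by
      intro w hw hwp h
      obtain ⟨l, hl0, h1, h2, hvz⟩ := hratio p w h
      have hwy : w ≠ y := by
        rintro rfl
        exact hDy h
      have hly : Dt w y = l * Dt p y := hvz y
      have hDwy : Dt w y ≠ 0 := by rw [hly]; exact mul_ne_zero hl0 hDy
      have hldiv : l = Dt w y / Dt p y := by
        rw [hly]
        field_simp
      have hl2 : Cos ω k κ l ∨ Cos ω k 0 l := by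
        rcases master w hw y hyT hDwy with ⟨hcc, -⟩ | ⟨hcc, -⟩
        · right
          rw [hldiv]
          have := cdiv hcc hcopy
          simpa using this
        · left
          rw [hldiv]
          have := cdiv hcc hcopy
          have heq : ((c0 : ℕ) : ZMod k) + κ - ((c0 : ℕ) : ZMod k) = κ := by ring
          rwa [heq] at this
      rcases hl2 with hl2 | hl2
      · exact ⟨l, hl2, h1, h2⟩
      · exact absurd (hsound p w l hl2 h1 h2).symm hwp
    intro w hw hwp w' hw' hwp' h h'
    obtain ⟨l, hcl, h1, h2⟩ := key w hw hwp h
    obtain ⟨l', hcl', h1', h2'⟩ := key w' hw' hwp' h'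
    have hl0 : l ≠ 0 := cos_ne_zero hω0 hcl
    have hdiv : Cos ω k 0 (l' / l) := by
      have := cdiv hcl' hcl
      simpa using this
    apply hsound w w' (l' / l) hdiv
    · rw [h1', h1]; field_simp
    · rw [h2', h2]; field_simp
  obtain ⟨w₀, hw₀⟩ : ∃ w₀, ∀ w ∈ T, w ≠ p → Dt p w = 0 → w = w₀ := by
    by_cases hB : ∃ w, w ∈ T ∧ w ≠ p ∧ Dt p w = 0
    · obtain ⟨w₀, h1, h2, h3⟩ := hB
      exact ⟨w₀, fun w hw hwp hD => hbad w hw hwp w₀ h1 h2 hD h3⟩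
    · push_neg at hB
      exact ⟨p, fun w hw hwp hD => absurd hD (hB w hw hwp)⟩
  -- the good set
  have hgood : ∀ w ∈ T, w ≠ p → w ≠ w₀ → Cos ω k ((c0 : ℕ) : ZMod k) (Dt p w) ∧ r p w := by
    intro w hw hwp hww0
    have hD : Dt p w ≠ 0 := fun h => hww0 (hw₀ w hw hwp h)
    have hr := hpmin w hw hwp
    exact ⟨(L1 p hpT w hw (Ne.symm hwp) hD).mpr hr, hr⟩
  have hsubc : m ≤ (T \ {p, w₀}).ncard := by
    have h1 : T.ncard ≤ (T \ {p, w₀}).ncard + ({p, w₀} : Set (Vtx F ω k)).ncard :=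
      Set.ncard_le_ncard_diff_add_ncard T {p, w₀} (Set.toFinite _)
    have h2 : ({p, w₀} : Set (Vtx F ω k)).ncard ≤ 2 :=
      (Set.ncard_insert_le _ _).trans (by rw [Set.ncard_singleton])
    omega
  obtain ⟨T₀, hT₀sub, hT₀card⟩ := Set.exists_subset_card_eq hsubc
  have hT₀T : ∀ w ∈ T₀, w ∈ T := fun w hw => (hT₀sub hw).1
  have hT₀g : ∀ w ∈ T₀, Cos ω k ((c0 : ℕ) : ZMod k) (Dt p w) := by
    intro w hw
    have h := hT₀sub hw
    have hne : w ≠ p ∧ w ≠ w₀ := by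
      have := h.2
      simp only [Set.mem_insert_iff, Set.mem_singleton_iff] at this
      tauto
    exact (hgood w h.1 hne.1 hne.2).1
  -- distinct elements of T₀ have nonzero determinant
  have hpair : ∀ w ∈ T₀, ∀ w' ∈ T₀, w ≠ w' → Dt w w' ≠ 0 := by
    intro w hw w' hw' hne hD0
    obtain ⟨l, hl0, h1, h2, -⟩ := hratio w w' hD0
    have hDpw' : Dt p w' = l * Dt p w := by
      simp only [hDt]
      rw [h1, h2]
      ring
    have hc1 := hT₀g w hw
    have hc2 := hT₀g w' hw'
    have hDpw0 : Dt p w ≠ 0 := cos_ne_zero hω0 hc1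
    have hl : Cos ω k 0 l := by
      have hld : l = Dt p w' / Dt p w := by rw [hDpw']; field_simp
      rw [hld]
      have := cdiv hc2 hc1
      simpa using this
    exact hne (hsound w w' l hl h1 h2)
  -- the linear functional
  obtain ⟨Lf, μ, hμ0, hLid⟩ : ∃ (Lf : F × F → F) (μ : F), μ ≠ 0 ∧
      ∀ w w' : Vtx F ω k,
        Lf (ρ w).1 * Dt p w' - Lf (ρ w').1 * Dt p w = μ * Dt w w' := by
    have hp0 : (ρ p).1.1 ≠ 0 ∨ (ρ p).1.2 ≠ 0 := by
      by_contra hcc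
      push_neg at hcc
      exact (ρ p).2 (Prod.ext_iff.mpr ⟨hcc.1, hcc.2⟩)
    rcases hp0 with h | h
    · exact ⟨Prod.fst, (ρ p).1.1, h, fun w w' => by simp only [hDt]; ring⟩
    · exact ⟨Prod.snd, (ρ p).1.2, h, fun w w' => by simp only [hDt]; ring⟩
  set ψ : Vtx F ω k → F := fun w => ω ^ (2 * c0) * Lf (ρ w).1 / (μ * Dt p w) with hψ
  have hdiff : ∀ w ∈ T₀, ∀ w' ∈ T₀,
      ψ w - ψ w' = ω ^ (2 * c0) * Dt w w' / (Dt p w * Dt p w') := by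
    intro w hw w' hw'
    have h1 : Dt p w ≠ 0 := cos_ne_zero hω0 (hT₀g w hw)
    have h2 : Dt p w' ≠ 0 := cos_ne_zero hω0 (hT₀g w' hw')
    have hden1 : μ * Dt p w ≠ 0 := mul_ne_zero hμ0 h1
    have hden2 : μ * Dt p w' ≠ 0 := mul_ne_zero hμ0 h2
    have hden3 : Dt p w * Dt p w' ≠ 0 := mul_ne_zero h1 h2
    rw [hψ]
    simp only
    rw [div_sub_div _ _ hden1 hden2, div_eq_div_iff (mul_ne_zero hden1 hden2) hden3]
    linear_combination (ω ^ (2 * c0) * μ * Dt p w * Dt p w') * hLid w w'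
  have hθ : ∀ w ∈ T₀, ∀ w' ∈ T₀, Cos ω k 0 (ω ^ (2 * c0) / (Dt p w * Dt p w')) := by
    intro w hw w' hw'
    have h1 : Cos ω k (((2 * c0 : ℕ)) : ZMod k) (ω ^ (2 * c0)) := ⟨2 * c0, rfl, rfl⟩
    have h2 : Cos ω k (((c0 : ℕ) : ZMod k) + ((c0 : ℕ) : ZMod k)) (Dt p w * Dt p w') :=
      cos_mul (hT₀g w hw) (hT₀g w' hw')
    have h3 := cdiv h1 h2
    have heq : (((2 * c0 : ℕ)) : ZMod k) - (((c0 : ℕ) : ZMod k) + ((c0 : ℕ) : ZMod k)) = 0 := by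
      push_cast
      ring
    rwa [heq] at h3
  have heqψ : ∀ w ∈ T₀, ∀ w' ∈ T₀,
      ψ w - ψ w' = (ω ^ (2 * c0) / (Dt p w * Dt p w')) * Dt w w' := by
    intro w hw w' hw'
    rw [hdiff w hw w' hw']
    ring
  have hcosdiff : ∀ w ∈ T₀, ∀ w' ∈ T₀, w ≠ w' →
      (Cos ω k ((c0 : ℕ) : ZMod k) (ψ w - ψ w') ↔ r w w') := by
    intro w hw w' hw' hne
    have hDp : Dt w w' ≠ 0 := hpair w hw w' hw' hne
    have hθ' := hθ w hw w' hw'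
    have hθ0 : (ω ^ (2 * c0) / (Dt p w * Dt p w')) ≠ 0 := cos_ne_zero hω0 hθ'
    have hL := L1 w (hT₀T w hw) w' (hT₀T w' hw') hne hDp
    rw [← hL]
    constructor
    · intro h
      have h2 := cdiv h hθ'
      have heq2 : (ψ w - ψ w') / (ω ^ (2 * c0) / (Dt p w * Dt p w')) = Dt w w' := by
        have hx : (ω : F) ^ (2 * c0) ≠ 0 := pow_ne_zero _ hω0
        have ha : Dt p w ≠ 0 := cos_ne_zero hω0 (hT₀g w hw)
        have hb : Dt p w' ≠ 0 := cos_ne_zero hω0 (hT₀g w' hw')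
        rw [heqψ w hw w' hw']
        field_simp
      rw [heq2] at h2
      simpa using h2
    · intro h
      rw [heqψ w hw w' hw']
      have h2 := cos_mul hθ' h
      simpa using h2
  -- injectivity
  have hinjψ : Set.InjOn ψ T₀ := by
    intro w hw w' hw' h
    by_contra hne
    have hDp : Dt w w' ≠ 0 := hpair w hw w' hw' hne
    have h0 : ψ w - ψ w' = 0 := by rw [h]; ring
    rw [heqψ w hw w' hw'] at h0
    have hθ0 : (ω ^ (2 * c0) / (Dt p w * Dt p w')) ≠ 0 := cos_ne_zero hω0 (hθ w hw w' hw')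
    exact (mul_ne_zero hθ0 hDp) h0
  -- contradiction with hPaley
  apply hPaley
  refine ⟨c0 + 1, by omega, by omega, ψ '' T₀, ?_, ?_, ?_⟩
  · rw [Set.ncard_image_of_injOn hinjψ, hT₀card]
  · rintro a ⟨w, hw, rfl⟩ b ⟨w', hw', rfl⟩ hab
    have hne : w ≠ w' := by rintro rfl; exact hab rfl
    by_cases hr : r w w'
    · right
      exact (hski c0 _).mpr ((hcosdiff w hw w' hw' hne).mpr hr)
    · left
      have hr' : r w' w := by
        have := htour w w' (fun h => hne h)
        tauto
      exact (hski c0 _).mpr ((hcosdiff w' hw' w hw (Ne.symm hne)).mpr hr')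
  · rintro a ⟨wa, hwa, rfl⟩ b ⟨wb, hwb, rfl⟩ d ⟨wd, hwd, rfl⟩ h1 h2
    have hc1 : Cos ω k ((c0 : ℕ) : ZMod k) (ψ wb - ψ wa) := (hski c0 _).mp h1
    have hc2 : Cos ω k ((c0 : ℕ) : ZMod k) (ψ wd - ψ wb) := (hski c0 _).mp h2
    have hba : wb ≠ wa := by
      rintro rfl
      exact cos_ne_zero hω0 hc1 (by ring)
    have hdb : wd ≠ wb := by
      rintro rfl
      exact cos_ne_zero hω0 hc2 (by ring)
    have hr1 : r wb wa := (hcosdiff wb hwb wa hwa hba).mp hc1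
    have hr2 : r wd wb := (hcosdiff wd hwd wb hwb hdb).mp hc2
    have hr3 : r wd wa := htrans wd (hT₀T wd hwd) wb (hT₀T wb hwb) wa (hT₀T wa hwa) hr2 hr1
    have hda : wd ≠ wa := by
      rintro rfl
      exact hirr _ hr3
    exact (hski c0 _).mpr ((hcosdiff wd hwd wa hwa hda).mpr hr3)
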